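/- The following are equivalent: (i) F_{n+2} = F_n + F_{n+1} for all n ≥ 1; (ii) F_3 = F_1 + F_2; (iii) d = 5 and a = b = 1/2 (i.e., ε = (1+√5)/2). -/

import Mathlib

lemma key_aux (d : ℕ) (hd : Squarefree d) (b : ℚ) (hb : 0 < b)
    (h : (d:ℚ) * b^2 = 5/4) : d = 5 ∧ b = 1/2 := by
  set c : ℚ := 2*b with hc
  have hc0 : 0 < c := by rw [hc]; linarith
  have hc5 : (d:ℚ) * c^2 = 5 := by rw [hc]; linear_combination 4*h
  have hden : ((c.den : ℚ)) ≠ 0 := by exact_mod_cast c.den_nz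
  have hnum : (d:ℤ) * c.num^2 = 5 * (c.den:ℤ)^2 := by
    have h2 := hc5
    rw [← Rat.num_div_den c] at h2
    field_simp at h2
    have h3 : (d:ℤ) * c.num^2 = (c.den:ℤ)^2 * 5 := by exact_mod_cast h2
    linarith
  have hcop : IsCoprime ((c.den:ℤ)) (c.num) :=
    Int.isCoprime_iff_gcd_eq_one.mpr (by simpa [Int.gcd] using c.reduced.symm)
  have hdvd : ((c.den:ℤ))^2 ∣ (d:ℤ) := by
    have h1 : ((c.den:ℤ))^2 ∣ (d:ℤ) * c.num^2 := ⟨5, by linarith⟩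
    exact (hcop.pow).dvd_of_dvd_mul_right h1
  have hdvd' : c.den^2 ∣ d := by exact_mod_cast hdvd
  have hden1 : c.den = 1 := by
    have := hd c.den (by simpa [sq] using hdvd')
    simpa [Nat.isUnit_iff] using this
  have hnpos : 0 < c.num := Rat.num_pos.mpr hc0
  set n := c.num.natAbs with hn
  have hnum' : (d:ℤ) * (n:ℤ)^2 = 5 := by
    rw [hn, Int.natAbs_of_nonneg hnpos.le]
    simpa [hden1] using hnum
  have hnat : d * n^2 = 5 := by exact_mod_cast hnum'
  have hd0 : 0 < d := by
    rcases Nat.eq_zero_or_pos d with h0 | h1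
    · simp [h0] at hnat
    · exact h1
  have hn5 : n^2 ≤ 5 := by nlinarith
  have hn2 : n ≤ 2 := by nlinarith
  have hn1 : 1 ≤ n := by
    rcases Nat.eq_zero_or_pos n with h0 | h1
    · simp [h0] at hnat
    · exact h1
  interval_cases n
  · constructor
    · omega
    · have hc1 : c = 1 := by
        rw [← Rat.num_div_den c, hden1]
        norm_num
        omega
      rw [hc] at hc1; linarith
  · omega

lemma key_arith (d : ℕ) (hd : Squarefree d) (hdpos : 0 < d)
    (a b : ℚ) (ha : 0 < a) (hb : 0 < b)
    (Δ : ℚ) (hΔ : Δ = a^2 - d * b^2) (hΔ1 : Δ = 1 ∨ Δ = -1) :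
    (4*a^2 - Δ = 1 + 2*a) ↔ (d = 5 ∧ a = 1/2 ∧ b = 1/2) := by
  constructor
  · intro h
    have hd0 : (0:ℚ) < d := by exact_mod_cast hdpos
    rcases hΔ1 with h1 | h1
    · exfalso
      rw [h1] at h
      have ha1 : a = 1 := by
        have hz : (a - 1) * (2*a + 1) = 0 := by linear_combination h/2
        rcases mul_eq_zero.mp hz with hz | hz
        · linarith
        · linarith
      rw [h1, ha1] at hΔ
      nlinarith [mul_pos hd0 (mul_pos hb hb)]
    · rw [h1] at h
      have ha2 : a = 1/2 := by
        have hz : a * (2*a - 1) = 0 := by linear_combination h/2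
        rcases mul_eq_zero.mp hz with hz | hz
        · linarith
        · linarith
      have hb2 : (d:ℚ) * b^2 = 5/4 := by
        rw [h1, ha2] at hΔ; linear_combination hΔ
      obtain ⟨hd5, hbv⟩ := key_aux d hd b hb hb2
      exact ⟨hd5, ha2, hbv⟩
  · rintro ⟨rfl, rfl, rfl⟩
    norm_num at hΔ
    rw [hΔ]; norm_num

theorem stmt_8 (d : ℕ) (hd : Squarefree d) (hdpos : 0 < d)
    (a b : ℚ) (ha : 0 < a) (hb : 0 < b)
    (ε εb : ℝ) (hε : ε = a + b * Real.sqrt d) (hεb : εb = a - b * Real.sqrt d)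
    (Δ : ℚ) (hΔ : Δ = a^2 - d * b^2) (hΔ1 : Δ = 1 ∨ Δ = -1)
    (F : ℕ → ℝ) (hF : ∀ n, F n = (ε^n - εb^n)/(ε - εb)) :
    ((∀ n : ℕ, 1 ≤ n → F (n+2) = F n + F (n+1)) ↔ F 3 = F 1 + F 2) ∧
      (F 3 = F 1 + F 2 ↔ (d = 5 ∧ a = 1/2 ∧ b = 1/2)) := by
  have hs2 : Real.sqrt d ^ 2 = (d:ℝ) := Real.sq_sqrt (by positivity)
  have hspos : 0 < Real.sqrt d := Real.sqrt_pos.mpr (by exact_mod_cast hdpos)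
  have hbR : (0:ℝ) < (b:ℚ) := by exact_mod_cast hb
  have hsub : ε - εb = 2 * b * Real.sqrt d := by rw [hε, hεb]; ring
  have hne : ε - εb ≠ 0 := by rw [hsub]; positivity
  have hsum : ε + εb = 2 * (a:ℝ) := by rw [hε, hεb]; ring
  have hprod : ε * εb = (Δ:ℝ) := by
    rw [hε, hεb, hΔ]; push_cast; linear_combination (-((b:ℝ)^2)) * hs2
  have hF1 : F 1 = 1 := by rw [hF, pow_one, pow_one]; exact div_self hne
  have hF2 : F 2 = 2 * (a:ℝ) := by
    rw [hF, div_eq_iff hne]; linear_combination (ε - εb) * hsum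
  have hF3 : F 3 = 4 * (a:ℝ)^2 - (Δ:ℝ) := by
    rw [hF, div_eq_iff hne]
    linear_combination (ε - εb) * (ε + εb + 2*(a:ℝ)) * hsum - (ε - εb) * hprod
  have hiff2 : (F 3 = F 1 + F 2) ↔ (4*a^2 - Δ = 1 + 2*a) := by
    rw [hF1, hF2, hF3]
    constructor
    · intro h; exact_mod_cast h
    · intro h; exact_mod_cast h
  have hmain : (F 3 = F 1 + F 2) ↔ (d = 5 ∧ a = 1/2 ∧ b = 1/2) :=
    hiff2.trans (key_arith d hd hdpos a b ha hb Δ hΔ hΔ1)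
  refine ⟨⟨fun h => by simpa using h 1 le_rfl, fun h n _ => ?_⟩, hmain⟩
  obtain ⟨hd5, ha5, hb5⟩ := hmain.mp h
  subst hd5 ha5 hb5
  have hε2 : ε^2 = ε + 1 := by
    rw [hε]; push_cast; linear_combination ((1:ℝ)/4) * hs2
  have hεb2 : εb^2 = εb + 1 := by
    rw [hεb]; push_cast; linear_combination ((1:ℝ)/4) * hs2
  rw [hF, hF, hF, ← add_div]
  congr 1
  linear_combination ε^n * hε2 - εb^n * hεb2
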